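/- Let R be a commutative ring, d ≥ 3, and let f₁, f₂ ∈ R, h ∈ R, and i ≠ j, with a third index k distinct from i, j. Then the matrix I_d + h(f₁e_i + f₂e_j)^T(f₂e_i − f₁e_j) (a matrix which is identity except for a 2×2 block ((1+hf₁f₂, −hf₁²),(hf₂², 1−hf₁f₂)) in rows/columns i, j) can be written as a product of matrices of the form (I_d − fE_{p,q})(I_d + h'E_{q,p})(I_d + fE_{p,q}) with h' ∈ hR, f ∈ R, p ≠ q. -/

import Mathlib

open Matrix

section BlockAux

variable {R : Type*} [CommRing R] {d : ℕ}

/-- `e p q` is the matrix unit `E_{p,q}`. -/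
private def e (p q : Fin d) : Matrix (Fin d) (Fin d) R := Matrix.single p q 1

private lemma esame (p q s : Fin d) : (e p q : Matrix (Fin d) (Fin d) R) * e q s = e p s := by
  simp [e]

private lemma emul (q r : Fin d) (hqr : q ≠ r) (p s : Fin d) :
    (e p q : Matrix (Fin d) (Fin d) R) * e r s = 0 :=
  Matrix.single_mul_single_of_ne (c := (1:R)) p q r hqr 1

private lemma triple_eq (p q : Fin d) (hpq : p ≠ q) (f h' : R) :
    (1 - Matrix.single p q f) * (1 + Matrix.single q p h') *
      (1 + Matrix.single p q f)
    = 1 + h' • e q p + (h' * f) • e q q + (-(f * h')) • e p p + (-(f * f * h')) • e p q := by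
  have h1 : Matrix.single p q f = f • (e p q : Matrix (Fin d) (Fin d) R) := by simp [e]
  have h2 : Matrix.single q p h' = h' • (e q p : Matrix (Fin d) (Fin d) R) := by simp [e]
  rw [h1, h2]
  simp only [mul_add, add_mul, sub_mul, mul_sub, one_mul, mul_one, smul_mul_assoc,
    mul_smul_comm, smul_smul, esame, emul p q hpq, emul q p hpq.symm, smul_zero, mul_zero,
    zero_mul, add_zero, zero_add]
  module

private lemma plain_eq (p q : Fin d) (h' : R) :
    (1 - Matrix.single p q (0 : R)) * (1 + Matrix.single q p h') *
      (1 + Matrix.single p q (0 : R))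
    = 1 + h' • e q p := by
  simp [e]

end BlockAux

set_option maxHeartbeats 1600000 in
/-- For `d ≥ 3`, `i ≠ j` with a third index `k` distinct from both, the matrix
`I_d + h·(f₁e_i + f₂e_j)ᵀ(f₂e_i − f₁e_j)` (identity except for the 2×2 block
`((1+hf₁f₂, −hf₁²),(hf₂², 1−hf₁f₂))` in rows/columns `i, j`) is a product of matrices of
the form `(I_d − fE_{p,q})(I_d + h'E_{q,p})(I_d + fE_{p,q})` with `h' ∈ hR`, `f ∈ R`,
`p ≠ q`. -/
theorem block_matrix_product_of_conjugated_elementaries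
    (R : Type*) [CommRing R] (d : ℕ) (hd : 3 ≤ d) (i j k : Fin d)
    (hij : i ≠ j) (hki : k ≠ i) (hkj : k ≠ j) (f₁ f₂ h : R) :
    ∃ L : List (Matrix (Fin d) (Fin d) R),
      (∀ X ∈ L, ∃ (p q : Fin d) (f h' : R), p ≠ q ∧ h' ∈ Ideal.span ({h} : Set R) ∧
        X = (1 - Matrix.single p q f) * (1 + Matrix.single q p h') *
          (1 + Matrix.single p q f)) ∧
      L.prod = 1 + Matrix.of (fun p q =>
        h * ((if p = i then f₁ else 0) + (if p = j then f₂ else 0)) *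
          ((if q = i then f₂ else 0) - (if q = j then f₁ else 0))) := by
  have hik : i ≠ k := hki.symm
  have hjk : j ≠ k := hkj.symm
  have hji : j ≠ i := hij.symm
  have mem : ∀ c : R, h * c ∈ Ideal.span ({h} : Set R) :=
    fun c => Ideal.mem_span_singleton.mpr ⟨c, rfl⟩
  refine ⟨[
    (1 - Matrix.single i k (-f₁)) * (1 + Matrix.single k i (h * f₂)) *
      (1 + Matrix.single i k (-f₁)),
    (1 - Matrix.single i j (0 : R)) * (1 + Matrix.single j i (h * (f₂ * f₂))) *
      (1 + Matrix.single i j (0 : R)),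
    (1 - Matrix.single k j (0 : R)) *
      (1 + Matrix.single j k (h * (-(f₁ * (f₂ * f₂))))) *
      (1 + Matrix.single k j (0 : R)),
    (1 - Matrix.single j k (-f₂)) * (1 + Matrix.single k j (h * (-f₁))) *
      (1 + Matrix.single j k (-f₂)),
    (1 - Matrix.single j i (0 : R)) * (1 + Matrix.single i j (h * (-(f₁ * f₁)))) *
      (1 + Matrix.single j i (0 : R)),
    (1 - Matrix.single k i (0 : R)) *
      (1 + Matrix.single i k (h * (f₁ * (f₁ * f₂)))) *
      (1 + Matrix.single k i (0 : R)),
    (1 - Matrix.single i k (0 : R)) * (1 + Matrix.single k i (h * (-f₂))) *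
      (1 + Matrix.single i k (0 : R)),
    (1 - Matrix.single j k (0 : R)) * (1 + Matrix.single k j (h * f₁)) *
      (1 + Matrix.single j k (0 : R))], ?_, ?_⟩
  · intro X hX
    simp only [List.mem_cons, List.not_mem_nil, or_false] at hX
    rcases hX with rfl | rfl | rfl | rfl | rfl | rfl | rfl | rfl
    · exact ⟨i, k, -f₁, h * f₂, hik, mem _, rfl⟩
    · exact ⟨i, j, 0, h * (f₂ * f₂), hij, mem _, rfl⟩
    · exact ⟨k, j, 0, h * (-(f₁ * (f₂ * f₂))), hkj, mem _, rfl⟩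
    · exact ⟨j, k, -f₂, h * (-f₁), hjk, mem _, rfl⟩
    · exact ⟨j, i, 0, h * (-(f₁ * f₁)), hji, mem _, rfl⟩
    · exact ⟨k, i, 0, h * (f₁ * (f₁ * f₂)), hki, mem _, rfl⟩
    · exact ⟨i, k, 0, h * (-f₂), hik, mem _, rfl⟩
    · exact ⟨j, k, 0, h * f₁, hjk, mem _, rfl⟩
  · simp only [List.prod_cons, List.prod_nil, mul_one]
    rw [triple_eq i k hik (-f₁) (h * f₂), plain_eq i j (h * (f₂ * f₂)),
      plain_eq k j (h * (-(f₁ * (f₂ * f₂)))), triple_eq j k hjk (-f₂) (h * (-f₁)),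
      plain_eq j i (h * (-(f₁ * f₁))), plain_eq k i (h * (f₁ * (f₁ * f₂))),
      plain_eq i k (h * (-f₂)), plain_eq j k (h * f₁)]
    have key :=
      calc (1 + (h * f₂) • e k i + ((h * f₂) * (-f₁)) • e k k + (-((-f₁) * (h * f₂))) • e i i + (-((-f₁) * (-f₁) * (h * f₂))) • e i k) * (1 + (h * (f₂ * f₂)) • e j i) * (1 + (h * (-(f₁ * (f₂ * f₂)))) • e j k) * (1 + (h * (-f₁)) • e k j + ((h * (-f₁)) * (-f₂)) • e k k + (-((-f₂) * (h * (-f₁)))) • e j j + (-((-f₂) * (-f₂) * (h * (-f₁)))) • e j k) * (1 + (h * (-(f₁ * f₁))) • e i j) * (1 + (h * (f₁ * (f₁ * f₂))) • e i k) * (1 + (h * (-f₂)) • e k i) * (1 + (h * f₁) • e k j)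
      _ = ((1 + (h*f₁*f₂) • e i i + (-h*f₁*f₁*f₂) • e i k + (h*f₂*f₂) • e j i + (h*f₂) • e k i + (-h*f₁*f₂) • e k k) : Matrix (Fin d) (Fin d) R) * (1 + (h * (-(f₁ * (f₂ * f₂)))) • e j k) * (1 + (h * (-f₁)) • e k j + ((h * (-f₁)) * (-f₂)) • e k k + (-((-f₂) * (h * (-f₁)))) • e j j + (-((-f₂) * (-f₂) * (h * (-f₁)))) • e j k) * (1 + (h * (-(f₁ * f₁))) • e i j) * (1 + (h * (f₁ * (f₁ * f₂))) • e i k) * (1 + (h * (-f₂)) • e k i) * (1 + (h * f₁) • e k j) := by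
        rw [show (1 + (h * f₂) • e k i + ((h * f₂) * (-f₁)) • e k k + (-((-f₁) * (h * f₂))) • e i i + (-((-f₁) * (-f₁) * (h * f₂))) • e i k) * (1 + (h * (f₂ * f₂)) • e j i) = ((1 + (h*f₁*f₂) • e i i + (-h*f₁*f₁*f₂) • e i k + (h*f₂*f₂) • e j i + (h*f₂) • e k i + (-h*f₁*f₂) • e k k) : Matrix (Fin d) (Fin d) R) from by
          simp only [mul_add, add_mul, one_mul, mul_one, smul_mul_assoc, mul_smul_comm,
            smul_smul, esame, emul i j hij, emul j i hji, emul i k hik, emul k i hki,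
            emul j k hjk, emul k j hkj, smul_zero, mul_zero, zero_mul, add_zero, zero_add]
          module]
      _ = ((1 + (h*f₁*f₂) • e i i + (-h*f₁*f₁*f₂) • e i k + (h*f₂*f₂) • e j i + (-h*f₁*f₂*f₂) • e j k + (h*f₂) • e k i + (-h*f₁*f₂) • e k k) : Matrix (Fin d) (Fin d) R) * (1 + (h * (-f₁)) • e k j + ((h * (-f₁)) * (-f₂)) • e k k + (-((-f₂) * (h * (-f₁)))) • e j j + (-((-f₂) * (-f₂) * (h * (-f₁)))) • e j k) * (1 + (h * (-(f₁ * f₁))) • e i j) * (1 + (h * (f₁ * (f₁ * f₂))) • e i k) * (1 + (h * (-f₂)) • e k i) * (1 + (h * f₁) • e k j) := by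
        rw [show ((1 + (h*f₁*f₂) • e i i + (-h*f₁*f₁*f₂) • e i k + (h*f₂*f₂) • e j i + (h*f₂) • e k i + (-h*f₁*f₂) • e k k) : Matrix (Fin d) (Fin d) R) * (1 + (h * (-(f₁ * (f₂ * f₂)))) • e j k) = ((1 + (h*f₁*f₂) • e i i + (-h*f₁*f₁*f₂) • e i k + (h*f₂*f₂) • e j i + (-h*f₁*f₂*f₂) • e j k + (h*f₂) • e k i + (-h*f₁*f₂) • e k k) : Matrix (Fin d) (Fin d) R) from by
          simp only [mul_add, add_mul, one_mul, mul_one, smul_mul_assoc, mul_smul_comm,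
            smul_smul, esame, emul i j hij, emul j i hji, emul i k hik, emul k i hki,
            emul j k hjk, emul k j hkj, smul_zero, mul_zero, zero_mul, add_zero, zero_add]
          module]
      _ = ((1 + (h*f₁*f₂) • e i i + (h*h*f₁*f₁*f₁*f₂) • e i j + (-h*f₁*f₁*f₂ - h*h*f₁*f₁*f₁*f₂*f₂) • e i k + (h*f₂*f₂) • e j i + (-h*f₁*f₂ + h*h*f₁*f₁*f₂*f₂) • e j j + (-h*h*f₁*f₁*f₂*f₂*f₂) • e j k + (h*f₂) • e k i + (-h*f₁ + h*h*f₁*f₁*f₂) • e k j + (-h*h*f₁*f₁*f₂*f₂) • e k k) : Matrix (Fin d) (Fin d) R) * (1 + (h * (-(f₁ * f₁))) • e i j) * (1 + (h * (f₁ * (f₁ * f₂))) • e i k) * (1 + (h * (-f₂)) • e k i) * (1 + (h * f₁) • e k j) := by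
        rw [show ((1 + (h*f₁*f₂) • e i i + (-h*f₁*f₁*f₂) • e i k + (h*f₂*f₂) • e j i + (-h*f₁*f₂*f₂) • e j k + (h*f₂) • e k i + (-h*f₁*f₂) • e k k) : Matrix (Fin d) (Fin d) R) * (1 + (h * (-f₁)) • e k j + ((h * (-f₁)) * (-f₂)) • e k k + (-((-f₂) * (h * (-f₁)))) • e j j + (-((-f₂) * (-f₂) * (h * (-f₁)))) • e j k) = ((1 + (h*f₁*f₂) • e i i + (h*h*f₁*f₁*f₁*f₂) • e i j + (-h*f₁*f₁*f₂ - h*h*f₁*f₁*f₁*f₂*f₂) • e i k + (h*f₂*f₂) • e j i + (-h*f₁*f₂ + h*h*f₁*f₁*f₂*f₂) • e j j + (-h*h*f₁*f₁*f₂*f₂*f₂) • e j k + (h*f₂) • e k i + (-h*f₁ + h*h*f₁*f₁*f₂) • e k j + (-h*h*f₁*f₁*f₂*f₂) • e k k) : Matrix (Fin d) (Fin d) R) from by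
          simp only [mul_add, add_mul, one_mul, mul_one, smul_mul_assoc, mul_smul_comm,
            smul_smul, esame, emul i j hij, emul j i hji, emul i k hik, emul k i hki,
            emul j k hjk, emul k j hkj, smul_zero, mul_zero, zero_mul, add_zero, zero_add]
          module]
      _ = ((1 + (h*f₁*f₂) • e i i + (-h*f₁*f₁) • e i j + (-h*f₁*f₁*f₂ - h*h*f₁*f₁*f₁*f₂*f₂) • e i k + (h*f₂*f₂) • e j i + (-h*f₁*f₂) • e j j + (-h*h*f₁*f₁*f₂*f₂*f₂) • e j k + (h*f₂) • e k i + (-h*f₁) • e k j + (-h*h*f₁*f₁*f₂*f₂) • e k k) : Matrix (Fin d) (Fin d) R) * (1 + (h * (f₁ * (f₁ * f₂))) • e i k) * (1 + (h * (-f₂)) • e k i) * (1 + (h * f₁) • e k j) := by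
        rw [show ((1 + (h*f₁*f₂) • e i i + (h*h*f₁*f₁*f₁*f₂) • e i j + (-h*f₁*f₁*f₂ - h*h*f₁*f₁*f₁*f₂*f₂) • e i k + (h*f₂*f₂) • e j i + (-h*f₁*f₂ + h*h*f₁*f₁*f₂*f₂) • e j j + (-h*h*f₁*f₁*f₂*f₂*f₂) • e j k + (h*f₂) • e k i + (-h*f₁ + h*h*f₁*f₁*f₂) • e k j + (-h*h*f₁*f₁*f₂*f₂) • e k k) : Matrix (Fin d) (Fin d) R) * (1 + (h * (-(f₁ * f₁))) • e i j) = ((1 + (h*f₁*f₂) • e i i + (-h*f₁*f₁) • e i j + (-h*f₁*f₁*f₂ - h*h*f₁*f₁*f₁*f₂*f₂) • e i k + (h*f₂*f₂) • e j i + (-h*f₁*f₂) • e j j + (-h*h*f₁*f₁*f₂*f₂*f₂) • e j k + (h*f₂) • e k i + (-h*f₁) • e k j + (-h*h*f₁*f₁*f₂*f₂) • e k k) : Matrix (Fin d) (Fin d) R) from by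
          simp only [mul_add, add_mul, one_mul, mul_one, smul_mul_assoc, mul_smul_comm,
            smul_smul, esame, emul i j hij, emul j i hji, emul i k hik, emul k i hki,
            emul j k hjk, emul k j hkj, smul_zero, mul_zero, zero_mul, add_zero, zero_add]
          module]
      _ = ((1 + (h*f₁*f₂) • e i i + (-h*f₁*f₁) • e i j + (h*f₂*f₂) • e j i + (-h*f₁*f₂) • e j j + (h*f₂) • e k i + (-h*f₁) • e k j) : Matrix (Fin d) (Fin d) R) * (1 + (h * (-f₂)) • e k i) * (1 + (h * f₁) • e k j) := by
        rw [show ((1 + (h*f₁*f₂) • e i i + (-h*f₁*f₁) • e i j + (-h*f₁*f₁*f₂ - h*h*f₁*f₁*f₁*f₂*f₂) • e i k + (h*f₂*f₂) • e j i + (-h*f₁*f₂) • e j j + (-h*h*f₁*f₁*f₂*f₂*f₂) • e j k + (h*f₂) • e k i + (-h*f₁) • e k j + (-h*h*f₁*f₁*f₂*f₂) • e k k) : Matrix (Fin d) (Fin d) R) * (1 + (h * (f₁ * (f₁ * f₂))) • e i k) = ((1 + (h*f₁*f₂) • e i i + (-h*f₁*f₁) • e i j + (h*f₂*f₂) • e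 j i + (-h*f₁*f₂) • e j j + (h*f₂) • e k i + (-h*f₁) • e k j) : Matrix (Fin d) (Fin d) R) from by
          simp only [mul_add, add_mul, one_mul, mul_one, smul_mul_assoc, mul_smul_comm,
            smul_smul, esame, emul i j hij, emul j i hji, emul i k hik, emul k i hki,
            emul j k hjk, emul k j hkj, smul_zero, mul_zero, zero_mul, add_zero, zero_add]
          module]
      _ = ((1 + (h*f₁*f₂) • e i i + (-h*f₁*f₁) • e i j + (h*f₂*f₂) • e j i + (-h*f₁*f₂) • e j j + (-h*f₁) • e k j) : Matrix (Fin d) (Fin d) R) * (1 + (h * f₁) • e k j) := by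
        rw [show ((1 + (h*f₁*f₂) • e i i + (-h*f₁*f₁) • e i j + (h*f₂*f₂) • e j i + (-h*f₁*f₂) • e j j + (h*f₂) • e k i + (-h*f₁) • e k j) : Matrix (Fin d) (Fin d) R) * (1 + (h * (-f₂)) • e k i) = ((1 + (h*f₁*f₂) • e i i + (-h*f₁*f₁) • e i j + (h*f₂*f₂) • e j i + (-h*f₁*f₂) • e j j + (-h*f₁) • e k j) : Matrix (Fin d) (Fin d) R) from by
          simp only [mul_add, add_mul, one_mul, mul_one, smul_mul_assoc, mul_smul_comm,
            smul_smul, esame, emul i j hij, emul j i hji, emul i k hik, emul k i hki,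
            emul j k hjk, emul k j hkj, smul_zero, mul_zero, zero_mul, add_zero, zero_add]
          module]
      _ = ((1 + (h*f₁*f₂) • e i i + (-h*f₁*f₁) • e i j + (h*f₂*f₂) • e j i + (-h*f₁*f₂) • e j j) : Matrix (Fin d) (Fin d) R) := by
        rw [show ((1 + (h*f₁*f₂) • e i i + (-h*f₁*f₁) • e i j + (h*f₂*f₂) • e j i + (-h*f₁*f₂) • e j j + (-h*f₁) • e k j) : Matrix (Fin d) (Fin d) R) * (1 + (h * f₁) • e k j) = ((1 + (h*f₁*f₂) • e i i + (-h*f₁*f₁) • e i j + (h*f₂*f₂) • e j i + (-h*f₁*f₂) • e j j) : Matrix (Fin d) (Fin d) R) from by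
          simp only [mul_add, add_mul, one_mul, mul_one, smul_mul_assoc, mul_smul_comm,
            smul_smul, esame, emul i j hij, emul j i hji, emul i k hik, emul k i hki,
            emul j k hjk, emul k j hkj, smul_zero, mul_zero, zero_mul, add_zero, zero_add]
          module]
      _ = 1 + Matrix.of (fun p q =>
        h * ((if p = i then f₁ else 0) + (if p = j then f₂ else 0)) *
          ((if q = i then f₂ else 0) - (if q = j then f₁ else 0))) := by
        ext a b
        simp only [Matrix.add_apply, Matrix.smul_apply, Matrix.of_apply, Matrix.one_apply,
          e, Matrix.single, smul_eq_mul]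
        by_cases hai : a = i <;> by_cases haj : a = j <;> by_cases hbi : b = i <;>
          by_cases hbj : b = j <;> simp_all [eq_comm] <;> ring
    simpa only [mul_assoc] using key
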